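/- For any q ∈ (0,1), λ ∈ (0,1) and integer n ≥ 1, one has ∑_{m=1}^n ∑_{j=0}^{m-1} ∑_{k=j+1}^{m-1} q^{(m-k)(k-j)} · λ^{j/2} ≤ (1-√λ)^{-1} · ∑_{k=1}^n q^k/(1-q^k). -/

import Mathlib

private lemma geomle {r : ℝ} (h0 : 0 ≤ r) (h1 : r < 1) (N : ℕ) :
    ∑ i ∈ Finset.range N, r ^ i ≤ (1 - r)⁻¹ := by
  have hN : 0 ≤ r ^ N := pow_nonneg h0 N
  have h1r : (0:ℝ) < 1 - r := by linarith
  rw [geom_sum_eq (ne_of_lt h1), div_le_iff_of_neg (by linarith : r - 1 < 0)]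
  have : (1 - r)⁻¹ * (r - 1) = -1 := by field_simp; ring
  linarith

/-- The estimate on the second summand in the proof of Lemma 3.7 of the paper:
for `q ∈ (0,1)`, `λ ∈ (0,1)` and `n ≥ 1`,
`∑_{m=1}^n ∑_{j=0}^{m-1} ∑_{k=j+1}^{m-1} q^{(m-k)(k-j)} λ^{j/2}
  ≤ (1-√λ)^{-1} ∑_{k=1}^n q^k/(1-q^k)`. -/
theorem stmt9 (q lam : ℝ) (hq : q ∈ Set.Ioo (0 : ℝ) 1) (hlam : lam ∈ Set.Ioo (0 : ℝ) 1)
    (n : ℕ) (hn : 1 ≤ n) :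
    ∑ m ∈ Finset.Icc 1 n, ∑ j ∈ Finset.range m, ∑ k ∈ Finset.Icc (j + 1) (m - 1),
        q ^ ((m - k) * (k - j)) * lam ^ ((j : ℝ) / 2)
      ≤ (1 - Real.sqrt lam)⁻¹ * ∑ k ∈ Finset.Icc 1 n, q ^ k / (1 - q ^ k) := by
  obtain ⟨hq0, hq1⟩ := hq
  obtain ⟨hl0, hl1⟩ := hlam
  set R := ∑ k ∈ Finset.Icc 1 n, q ^ k / (1 - q ^ k) with hR
  have hqk : ∀ a : ℕ, 1 ≤ a → 0 < q ^ a ∧ q ^ a < 1 := fun a ha =>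
    ⟨pow_pos hq0 a, pow_lt_one₀ hq0.le hq1 (by omega)⟩
  have hterm : ∀ a : ℕ, 1 ≤ a → 0 ≤ q ^ a / (1 - q ^ a) := by
    intro a ha
    obtain ⟨h1, h2⟩ := hqk a ha
    exact div_nonneg h1.le (by linarith)
  have hR0 : 0 ≤ R :=
    Finset.sum_nonneg fun k hk => hterm k (Finset.mem_Icc.mp hk).1
  -- inner geometric bound
  have hinner : ∀ a : ℕ, 1 ≤ a → ∀ k : ℕ,
      ∑ m ∈ Finset.Icc (k + 1) n, q ^ ((m - k) * a) ≤ q ^ a / (1 - q ^ a) := by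
    intro a ha k
    obtain ⟨hqa0, hqa1⟩ := hqk a ha
    rw [← Finset.Ico_add_one_right_eq_Icc, Finset.sum_Ico_eq_sum_range]
    have key : ∀ i : ℕ, q ^ ((k + 1 + i - k) * a) = q ^ a * (q ^ a) ^ i := by
      intro i
      have h1 : (k + 1 + i - k) * a = a + a * i := by
        have : k + 1 + i - k = 1 + i := by omega
        rw [this]; ring
      rw [h1, pow_add, pow_mul]
    calc ∑ i ∈ Finset.range (n + 1 - (k + 1)), q ^ ((k + 1 + i - k) * a)
        = q ^ a * ∑ i ∈ Finset.range (n + 1 - (k + 1)), (q ^ a) ^ i := by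
          rw [Finset.mul_sum]; exact Finset.sum_congr rfl fun i _ => key i
      _ ≤ q ^ a * (1 - q ^ a)⁻¹ :=
          mul_le_mul_of_nonneg_left (geomle hqa0.le hqa1 _) hqa0.le
      _ = q ^ a / (1 - q ^ a) := by rw [div_eq_mul_inv]
  -- bound for each fixed j
  have hT : ∀ j : ℕ,
      ∑ m ∈ Finset.Icc 1 n, ∑ k ∈ Finset.Icc (j + 1) (m - 1),
        q ^ ((m - k) * (k - j)) ≤ R := by
    intro j
    rw [Finset.sum_comm' (t' := Finset.Icc (j + 1) n)
      (s' := fun k => Finset.Icc (k + 1) n)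
      (fun m k => by simp only [Finset.mem_Icc]; omega)]
    calc ∑ k ∈ Finset.Icc (j + 1) n, ∑ m ∈ Finset.Icc (k + 1) n,
            q ^ ((m - k) * (k - j))
        ≤ ∑ k ∈ Finset.Icc (j + 1) n, q ^ (k - j) / (1 - q ^ (k - j)) := by
          refine Finset.sum_le_sum fun k hk => ?_
          exact hinner (k - j) (by have := (Finset.mem_Icc.mp hk).1; omega) k
      _ = ∑ i ∈ Finset.range (n + 1 - (j + 1)),
            q ^ (i + 1) / (1 - q ^ (i + 1)) := by
          rw [← Finset.Ico_add_one_right_eq_Icc, Finset.sum_Ico_eq_sum_range]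
          exact Finset.sum_congr rfl fun i _ => by
            have : j + 1 + i - j = i + 1 := by omega
            rw [this]
      _ ≤ ∑ i ∈ Finset.range n, q ^ (i + 1) / (1 - q ^ (i + 1)) :=
          Finset.sum_le_sum_of_subset_of_nonneg
            (Finset.range_subset_range.mpr (by omega))
            (fun i _ _ => hterm (i + 1) (by omega))
      _ = R := by
          rw [hR, ← Finset.Ico_add_one_right_eq_Icc, Finset.sum_Ico_eq_sum_range]
          have : n + 1 - 1 = n := by omega
          rw [this]
          exact Finset.sum_congr rfl fun i _ => by rw [Nat.add_comm 1 i]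
  -- facts about √λ
  have hs0 : 0 ≤ Real.sqrt lam := Real.sqrt_nonneg _
  have hs1 : Real.sqrt lam < 1 := by
    rw [show (1:ℝ) = Real.sqrt 1 by rw [Real.sqrt_one]]
    exact Real.sqrt_lt_sqrt hl0.le hl1
  have hpow : ∀ j : ℕ, lam ^ ((j : ℝ) / 2) = Real.sqrt lam ^ j := by
    intro j
    rw [Real.sqrt_eq_rpow, ← Real.rpow_natCast (lam ^ ((1:ℝ)/2)) j,
      ← Real.rpow_mul hl0.le]
    congr 1; ring
  -- rearrange the LHS
  have hLHS : ∑ m ∈ Finset.Icc 1 n, ∑ j ∈ Finset.range m,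
        ∑ k ∈ Finset.Icc (j + 1) (m - 1), q ^ ((m - k) * (k - j)) * lam ^ ((j : ℝ) / 2)
      = ∑ j ∈ Finset.range n,
          (∑ m ∈ Finset.Icc 1 n, ∑ k ∈ Finset.Icc (j + 1) (m - 1),
            q ^ ((m - k) * (k - j))) * Real.sqrt lam ^ j := by
    rw [Finset.sum_congr rfl (fun m hm => Finset.sum_subset
      (Finset.range_subset_range.mpr (Finset.mem_Icc.mp hm).2)
      (fun j _ hj => by
        have hmj : m ≤ j := by
          by_contra h; exact hj (Finset.mem_range.mpr (by omega))
        have : Finset.Icc (j + 1) (m - 1) = ∅ := by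
          rw [Finset.Icc_eq_empty_iff]; omega
        rw [this, Finset.sum_empty])), Finset.sum_comm]
    refine Finset.sum_congr rfl fun j _ => ?_
    rw [Finset.sum_mul]
    refine Finset.sum_congr rfl fun m _ => ?_
    rw [Finset.sum_mul, hpow j]
  rw [hLHS]
  calc ∑ j ∈ Finset.range n,
        (∑ m ∈ Finset.Icc 1 n, ∑ k ∈ Finset.Icc (j + 1) (m - 1),
          q ^ ((m - k) * (k - j))) * Real.sqrt lam ^ j
      ≤ ∑ j ∈ Finset.range n, R * Real.sqrt lam ^ j :=
        Finset.sum_le_sum fun j _ =>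
          mul_le_mul_of_nonneg_right (hT j) (pow_nonneg hs0 j)
    _ = R * ∑ j ∈ Finset.range n, Real.sqrt lam ^ j := by rw [Finset.mul_sum]
    _ ≤ R * (1 - Real.sqrt lam)⁻¹ :=
        mul_le_mul_of_nonneg_left (geomle hs0 hs1 n) hR0
    _ = (1 - Real.sqrt lam)⁻¹ * R := mul_comm _ _
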